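/- For every integer N ≥ 1 and all p ∈ ℂ^N, t ∈ ℂ^{N+1} satisfying |Im p_i| < 2 for i = 1,…,N and |Im t_j| < π/2 for j = 1,…,N+1, the function z ↦ exp(i z·p) · ∏_{1≤j<k≤N} sinh(z_j−z_k) / ∏_{j=1}^{N+1} ∏_{k=1}^{N} cosh(t_j−z_k) is Lebesgue integrable on ℝ^N (i.e. the integral I_N(p,t) = ∫_{ℝ^N} exp(i z·p) ∏_{1≤j<k≤N} sinh(z_j−z_k) / ∏_{j=1}^{N+1} ∏_{k=1}^{N} cosh(t_j−z_k) dz converges absolutely). -/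

import Mathlib

open MeasureTheory Complex

section aux
lemma my_cosh_re (w : ℂ) : (Complex.cosh w).re = Real.cosh w.re * Real.cos w.im := by
  rw [show Complex.cosh w = (Complex.exp w + Complex.exp (-w)) / 2 from rfl]
  rw [show ((2:ℂ)) = ((2:ℝ):ℂ) by norm_num, Complex.div_ofReal_re]
  simp [Complex.exp_re, Real.cos_neg, Real.cosh_eq]
  ring

lemma my_exp_abs_le_cosh (u : ℝ) : Real.exp |u| / 2 ≤ Real.cosh u := by
  rw [Real.cosh_eq]
  rcases le_total 0 u with h | h
  · rw [_root_.abs_of_nonneg h]; have := Real.exp_pos (-u); linarith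
  · rw [_root_.abs_of_nonpos h]; have := Real.exp_pos u; linarith

lemma my_cosh_lower (t : ℂ) (h : |t.im| < Real.pi / 2) (x : ℝ) :
    Real.cos t.im / 2 * Real.exp (|x| - |t.re|) ≤ ‖Complex.cosh (t - x)‖ := by
  have hc : 0 < Real.cos t.im :=
    Real.cos_pos_of_mem_Ioo ⟨by linarith [(abs_lt.mp h).1], (abs_lt.mp h).2⟩
  have hre : (Complex.cosh (t - (x:ℂ))).re = Real.cosh (t.re - x) * Real.cos t.im := by
    rw [my_cosh_re]; simp
  have h1 : Real.exp (|x| - |t.re|) ≤ Real.exp |t.re - x| := by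
    apply Real.exp_le_exp.mpr
    have h2 := abs_sub_abs_le_abs_sub x t.re
    rw [abs_sub_comm] at h2
    linarith
  calc Real.cos t.im / 2 * Real.exp (|x| - |t.re|)
      ≤ Real.cos t.im * (Real.exp |t.re - x| / 2) := by
        rw [div_mul_eq_mul_div, mul_div_assoc]; gcongr
    _ ≤ Real.cos t.im * Real.cosh (t.re - x) := by gcongr; exact my_exp_abs_le_cosh _
    _ = (Complex.cosh (t - (x:ℂ))).re := by rw [hre]; ring
    _ ≤ |(Complex.cosh (t - (x:ℂ))).re| := le_abs_self _
    _ ≤ ‖Complex.cosh (t - (x:ℂ))‖ := Complex.abs_re_le_norm _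

lemma my_int_exp_abs {b : ℝ} (hb : 0 < b) : Integrable (fun x : ℝ => Real.exp (-b * |x|)) := by
  have hIoi : IntegrableOn (fun x : ℝ => Real.exp (-b * |x|)) (Set.Ioi 0) := by
    refine (exp_neg_integrableOn_Ioi 0 hb).congr_fun (fun x hx => ?_) measurableSet_Ioi
    rw [_root_.abs_of_pos hx]
  have hIic : IntegrableOn (fun x : ℝ => Real.exp (-b * |x|)) (Set.Iic 0) := by
    rw [← Measure.map_neg_eq_self (volume : Measure ℝ)]
    have m : MeasurableEmbedding fun x : ℝ => -x := (Homeomorph.neg ℝ).measurableEmbedding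
    rw [m.integrableOn_map_iff]
    simp_rw [Function.comp_def, abs_neg, Set.neg_preimage, Set.neg_Iic, neg_zero]
    exact Iff.mpr integrableOn_Ici_iff_integrableOn_Ioi hIoi
  rw [← integrableOn_univ, ← Set.Iic_union_Ioi (a := (0:ℝ))]
  exact hIic.union hIoi

lemma my_pair_sum {N : ℕ} (a : Fin N → ℝ) :
    ∑ q ∈ Finset.univ.filter (fun q : Fin N × Fin N => q.1 < q.2), (a q.1 + a q.2)
      = ((N : ℝ) - 1) * ∑ i, a i := by
  rw [Finset.sum_add_distrib]
  have hswap : ∑ q ∈ Finset.univ.filter (fun q : Fin N × Fin N => q.1 < q.2), a q.2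
      = ∑ q ∈ Finset.univ.filter (fun q : Fin N × Fin N => q.2 < q.1), a q.1 := by
    apply Finset.sum_nbij' (fun q => Prod.swap q) (fun q => Prod.swap q) <;> simp
  rw [hswap]
  have hsplit : ∑ q ∈ Finset.univ.filter (fun q : Fin N × Fin N => q.1 < q.2), a q.1
      + ∑ q ∈ Finset.univ.filter (fun q : Fin N × Fin N => q.2 < q.1), a q.1
      = ∑ q ∈ Finset.univ.filter (fun q : Fin N × Fin N => q.1 ≠ q.2), a q.1 := by
    rw [← Finset.sum_filter_add_sum_filter_not
      (Finset.univ.filter (fun q : Fin N × Fin N => q.1 ≠ q.2)) (fun q => q.1 < q.2)]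
    rw [Finset.filter_filter, Finset.filter_filter]
    congr 1
    · apply Finset.sum_congr _ (fun _ _ => rfl)
      apply Finset.filter_congr
      intro q _
      simp only [Fin.lt_def, Fin.ext_iff, ne_eq]
      omega
    · apply Finset.sum_congr _ (fun _ _ => rfl)
      apply Finset.filter_congr
      intro q _
      simp only [Fin.lt_def, Fin.ext_iff, ne_eq, not_lt]
      omega
  rw [hsplit]
  have htot : ∑ q ∈ (Finset.univ : Finset (Fin N × Fin N)), a q.1 = (N : ℝ) * ∑ i, a i := by
    rw [Fintype.sum_prod_type]
    simp [Finset.sum_const, mul_comm, Finset.mul_sum]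
    rw [Finset.sum_mul]
  have hdiag : ∑ q ∈ Finset.univ.filter (fun q : Fin N × Fin N => q.1 = q.2), a q.1
      = ∑ i, a i := by
    apply Finset.sum_nbij' (fun q => q.1) (fun i => (i, i)) <;> simp +contextual
  have h1 := Finset.sum_filter_add_sum_filter_not (Finset.univ : Finset (Fin N × Fin N))
    (fun q => q.1 = q.2) (fun q => a q.1)
  rw [htot, hdiag] at h1
  have hne : ∑ q ∈ Finset.univ.filter (fun q : Fin N × Fin N => ¬ q.1 = q.2), a q.1
      = ((N : ℝ) - 1) * ∑ i, a i := by linarith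
  rw [← hne]
end aux

/-- Absolute convergence of the integral `I_N(p,t)` (Lemma C.1, first part):
for `N ≥ 1`, `p ∈ ℂ^N` with `|Im p_i| < 2` and `t ∈ ℂ^{N+1}` with `|Im t_j| < π/2`, the
integrand of `I_N(p,t)` is Lebesgue integrable on `ℝ^N`. -/
theorem statement0 (N : ℕ) (hN : 1 ≤ N) (p : Fin N → ℂ) (t : Fin (N + 1) → ℂ)
    (hp : ∀ i : Fin N, |(p i).im| < 2)
    (ht : ∀ j : Fin (N + 1), |(t j).im| < Real.pi / 2) :
    Integrable (fun z : Fin N → ℝ =>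
      Complex.exp (Complex.I * ∑ i : Fin N, (z i : ℂ) * p i) *
        (∏ q ∈ Finset.univ.filter (fun q : Fin N × Fin N => q.1 < q.2),
          Complex.sinh ((z q.1 : ℂ) - (z q.2 : ℂ))) /
        ∏ j : Fin (N + 1), ∏ k : Fin N, Complex.cosh (t j - (z k : ℂ))) := by
  -- notation
  set S := Finset.univ.filter (fun q : Fin N × Fin N => q.1 < q.2) with hS
  have hc : ∀ j, 0 < Real.cos (t j).im := fun j =>
    Real.cos_pos_of_mem_Ioo ⟨by linarith [(abs_lt.mp (ht j)).1], (abs_lt.mp (ht j)).2⟩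
  set c : Fin (N + 1) → ℝ := fun j => Real.cos (t j).im / 2 * Real.exp (-|(t j).re|) with hcdef
  have hcpos : ∀ j, 0 < c j := fun j =>
    mul_pos (by linarith [hc j]) (Real.exp_pos _)
  set C0 : ℝ := ∏ j, (c j) ^ N with hC0
  have hC0pos : 0 < C0 := Finset.prod_pos fun j _ => pow_pos (hcpos j) N
  -- the bounding function
  set G : (Fin N → ℝ) → ℝ :=
    fun z => C0⁻¹ * ∏ k, Real.exp (-(2 - |(p k).im|) * |z k|) with hG
  have hGint : Integrable G := by
    apply Integrable.const_mul
    exact Integrable.fintype_prod fun k => my_int_exp_abs (by linarith [hp k])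
  -- nonvanishing of the denominator
  have hcoshne : ∀ (z : Fin N → ℝ) (j : Fin (N+1)) (k : Fin N),
      Complex.cosh (t j - (z k : ℂ)) ≠ 0 := by
    intro z j k h0
    have h1 : (Complex.cosh (t j - (z k : ℂ))).re
        = Real.cosh ((t j).re - z k) * Real.cos (t j).im := by rw [my_cosh_re]; simp
    rw [h0] at h1
    simp only [Complex.zero_re] at h1
    nlinarith [Real.cosh_pos ((t j).re - z k), hc j]
  -- continuity / measurability
  have hcont : Continuous (fun z : Fin N → ℝ =>
      Complex.exp (Complex.I * ∑ i : Fin N, (z i : ℂ) * p i) *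
        (∏ q ∈ S, Complex.sinh ((z q.1 : ℂ) - (z q.2 : ℂ))) /
        ∏ j : Fin (N + 1), ∏ k : Fin N, Complex.cosh (t j - (z k : ℂ))) := by
    apply Continuous.div
    · apply Continuous.mul
      · exact Complex.continuous_exp.comp (continuous_const.mul (continuous_finset_sum _
          fun i _ => (Complex.continuous_ofReal.comp (continuous_apply i)).mul continuous_const))
      · exact continuous_finset_prod _ fun q _ => Complex.continuous_sinh.comp
          ((Complex.continuous_ofReal.comp (continuous_apply q.1)).sub
           (Complex.continuous_ofReal.comp (continuous_apply q.2)))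
    · exact continuous_finset_prod _ fun j _ => continuous_finset_prod _ fun k _ =>
        Complex.continuous_cosh.comp
          (continuous_const.sub (Complex.continuous_ofReal.comp (continuous_apply k)))
    · intro z
      exact Finset.prod_ne_zero_iff.mpr fun j _ =>
        Finset.prod_ne_zero_iff.mpr fun k _ => hcoshne z j k
  apply Integrable.mono' hGint hcont.aestronglyMeasurable
  refine Filter.Eventually.of_forall fun z => ?_
  -- the pointwise bound
  set s : ℝ := ∑ k, |z k| with hs
  set S1 : ℝ := ∑ k, |(p k).im| * |z k| with hS1
  have hA : ‖Complex.exp (Complex.I * ∑ i : Fin N, (z i : ℂ) * p i)‖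
      ≤ Real.exp S1 := by
    rw [Complex.norm_exp]
    apply Real.exp_le_exp.mpr
    have h1 : (Complex.I * ∑ i : Fin N, (z i : ℂ) * p i).re
        = -∑ i, z i * (p i).im := by
      simp [Complex.mul_re, Complex.im_sum, Complex.mul_im]
    rw [h1, hS1]
    calc -∑ i, z i * (p i).im ≤ |∑ i, z i * (p i).im| := neg_le_abs _
      _ ≤ ∑ i, |z i * (p i).im| := Finset.abs_sum_le_sum_abs _ _
      _ = ∑ k, |(p k).im| * |z k| := by
          apply Finset.sum_congr rfl
          intro i _
          rw [abs_mul]; ring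
  have hB : ‖∏ q ∈ S, Complex.sinh ((z q.1 : ℂ) - (z q.2 : ℂ))‖
      ≤ Real.exp (((N : ℝ) - 1) * s) := by
    rw [norm_prod]
    calc ∏ q ∈ S, ‖Complex.sinh ((z q.1 : ℂ) - (z q.2 : ℂ))‖
        ≤ ∏ q ∈ S, Real.exp (|z q.1| + |z q.2|) := by
          apply Finset.prod_le_prod (fun q _ => norm_nonneg _)
          intro q _
          have he : ((z q.1 : ℂ) - (z q.2 : ℂ)) = ((z q.1 - z q.2 : ℝ) : ℂ) := by push_cast; ring
          rw [he, ← Complex.ofReal_sinh, Complex.norm_real, Real.norm_eq_abs, Real.abs_sinh, Real.sinh_eq]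
          have hd : |z q.1 - z q.2| ≤ |z q.1| + |z q.2| := abs_sub _ _
          have h3 := Real.exp_le_exp.mpr hd
          have h4 := Real.exp_pos (-|z q.1 - z q.2|)
          have h5 := Real.exp_pos (|z q.1| + |z q.2|)
          linarith
      _ = Real.exp (∑ q ∈ S, (|z q.1| + |z q.2|)) := by rw [Real.exp_sum]
      _ = Real.exp (((N : ℝ) - 1) * s) := by
          rw [hS, hs]; congr 1; exact my_pair_sum (fun i => |z i|)
  -- denominator lower bound
  set L : ℝ := ∏ j, ∏ k, (Real.cos (t j).im / 2 * Real.exp (|z k| - |(t j).re|)) with hL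
  have hLpos : 0 < L :=
    Finset.prod_pos fun j _ => Finset.prod_pos fun k _ =>
      mul_pos (by linarith [hc j]) (Real.exp_pos _)
  have hD : L ≤ ‖∏ j, ∏ k, Complex.cosh (t j - (z k : ℂ))‖ := by
    rw [norm_prod]
    apply Finset.prod_le_prod (fun j _ => Finset.prod_nonneg fun k _ =>
      le_of_lt (mul_pos (by linarith [hc j]) (Real.exp_pos _)))
    intro j _
    rw [norm_prod]
    apply Finset.prod_le_prod (fun k _ =>
      le_of_lt (mul_pos (by linarith [hc j]) (Real.exp_pos _)))
    intro k _
    exact my_cosh_lower (t j) (ht j) (z k)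
  -- compute L
  have hLval : L = C0 * Real.exp (((N : ℝ) + 1) * s) := by
    rw [hL, hC0]
    have hinner : ∀ j : Fin (N+1),
        ∏ k, (Real.cos (t j).im / 2 * Real.exp (|z k| - |(t j).re|))
          = (c j) ^ N * Real.exp s := by
      intro j
      have : ∀ k : Fin N, Real.cos (t j).im / 2 * Real.exp (|z k| - |(t j).re|)
          = c j * Real.exp (|z k|) := by
        intro k
        show Real.cos (t j).im / 2 * Real.exp (|z k| - |(t j).re|)
          = Real.cos (t j).im / 2 * Real.exp (-|(t j).re|) * Real.exp |z k|
        rw [Real.exp_sub, Real.exp_neg]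
        ring
      simp_rw [this]
      rw [Finset.prod_mul_distrib, Finset.prod_const, ← Real.exp_sum, Finset.card_univ,
        Fintype.card_fin]
    simp_rw [hinner]
    rw [Finset.prod_mul_distrib, Finset.prod_const, Finset.card_univ, Fintype.card_fin,
      ← Real.exp_nat_mul]
    congr 1
    push_cast
    ring
  -- combine
  have hnorm : ‖Complex.exp (Complex.I * ∑ i : Fin N, (z i : ℂ) * p i) *
        (∏ q ∈ S, Complex.sinh ((z q.1 : ℂ) - (z q.2 : ℂ))) /
        ∏ j : Fin (N + 1), ∏ k : Fin N, Complex.cosh (t j - (z k : ℂ))‖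
      = ‖Complex.exp (Complex.I * ∑ i : Fin N, (z i : ℂ) * p i)‖ *
        ‖∏ q ∈ S, Complex.sinh ((z q.1 : ℂ) - (z q.2 : ℂ))‖ /
        ‖∏ j : Fin (N + 1), ∏ k : Fin N, Complex.cosh (t j - (z k : ℂ))‖ := by
    rw [norm_div, norm_mul]
  rw [hnorm]
  calc ‖Complex.exp (Complex.I * ∑ i : Fin N, (z i : ℂ) * p i)‖ *
        ‖∏ q ∈ S, Complex.sinh ((z q.1 : ℂ) - (z q.2 : ℂ))‖ /
        ‖∏ j : Fin (N + 1), ∏ k : Fin N, Complex.cosh (t j - (z k : ℂ))‖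
      ≤ Real.exp S1 * Real.exp (((N : ℝ) - 1) * s) / L := by
        apply div_le_div₀ (by positivity)
          (mul_le_mul hA hB (norm_nonneg _) (Real.exp_nonneg _)) hLpos hD
    _ = G z := by
        rw [hLval]
        simp only [hG]
        have hprod : ∏ k, Real.exp (-(2 - |(p k).im|) * |z k|)
            = Real.exp (S1 - 2 * s) := by
          rw [← Real.exp_sum]
          congr 1
          rw [hS1, hs, Finset.mul_sum, ← Finset.sum_sub_distrib]
          apply Finset.sum_congr rfl
          intro k _
          ring
        rw [hprod, ← Real.exp_add,
          show S1 - 2 * s = (S1 + ((N:ℝ) - 1) * s) - (((N:ℝ) + 1) * s) by ring,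
          Real.exp_sub]
        field_simp
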